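/- Let $\{\Delta_t\}$ be a stochastic contraction process with average rate $\bar M$, and let $N_t$ be defined by $N_0=\bar M$, $N_{t+1}=N_t(I-2\bar M)+\|N_t\|\cdot \bar M$. Then for every $t\ge0$, $\mathbb{E}\,\|\Delta_t\|_{\bar M}^2 \le \mathbb{E}\,\|\Delta_0\|_{N_t}^2$. -/

import Mathlib

open MeasureTheory ProbabilityTheory Matrix
open scoped Matrix.Norms.L2Operator

/-- The product `σ`-algebra on matrices (entrywise). -/
instance matrixMeasurableSpace {n : ℕ} : MeasurableSpace (Matrix (Fin n) (Fin n) ℝ) :=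
  (inferInstance : MeasurableSpace (Fin n → Fin n → ℝ))

section Aux

variable {n : ℕ}

lemma SBR.quad_expand (A : Matrix (Fin n) (Fin n) ℝ) (x : Fin n → ℝ) :
    x ⬝ᵥ (A *ᵥ x) = ∑ i, ∑ j, x i * A i j * x j := by
  simp [dotProduct, mulVec, Finset.mul_sum, mul_assoc]

lemma SBR.adj_dot (A : Matrix (Fin n) (Fin n) ℝ) (x y : Fin n → ℝ) :
    (A *ᵥ x) ⬝ᵥ y = x ⬝ᵥ (Aᵀ *ᵥ y) := by
  rw [dotProduct_comm, dotProduct_mulVec, ← Matrix.mulVec_transpose, dotProduct_comm]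

lemma SBR.quad_le_norm (A : Matrix (Fin n) (Fin n) ℝ) (x : Fin n → ℝ) :
    x ⬝ᵥ (A *ᵥ x) ≤ ‖A‖ * (x ⬝ᵥ x) := by
  set X : EuclideanSpace ℝ (Fin n) := (EuclideanSpace.equiv (Fin n) ℝ).symm x with hX
  have h1 : x ⬝ᵥ (A *ᵥ x) = inner ℝ X ((EuclideanSpace.equiv (Fin n) ℝ).symm (A *ᵥ x)) := by
    rw [EuclideanSpace.inner_eq_star_dotProduct]
    simp [hX]; exact dotProduct_comm _ _
  have h2 := real_inner_le_norm X ((EuclideanSpace.equiv (Fin n) ℝ).symm (A *ᵥ x))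
  have h3 := A.l2_opNorm_mulVec X
  have h4 : (x ⬝ᵥ x) = ‖X‖ ^ 2 := by
    rw [← real_inner_self_eq_norm_sq, EuclideanSpace.inner_eq_star_dotProduct]; simp [hX]
  have h5 : A *ᵥ (WithLp.equiv 2 _ X) = A *ᵥ x := by simp [hX]
  calc x ⬝ᵥ (A *ᵥ x) ≤ ‖X‖ * ‖(EuclideanSpace.equiv (Fin n) ℝ).symm (A *ᵥ x)‖ := h1 ▸ h2
    _ ≤ ‖X‖ * (‖A‖ * ‖X‖) := by
        refine mul_le_mul_of_nonneg_left ?_ (norm_nonneg _)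
        have h5' : X.ofLp = x := by simp [hX]
        rw [h5'] at h3; exact h3
    _ = ‖A‖ * (x ⬝ᵥ x) := by rw [h4]; ring

lemma SBR.sq_le_self (Mx : Matrix (Fin n) (Fin n) ℝ) (hM : Mx.PosSemidef)
    (hM1 : ((1 : Matrix (Fin n) (Fin n) ℝ) - Mx).PosSemidef) (x : Fin n → ℝ) :
    x ⬝ᵥ ((Mx * Mx) *ᵥ x) ≤ x ⬝ᵥ (Mx *ᵥ x) := by
  open scoped MatrixOrder in
  obtain ⟨S, hSS, hSH⟩ : ∃ S : Matrix (Fin n) (Fin n) ℝ, S * S = Mx ∧ Sᵀ = S :=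
    ⟨CFC.sqrt Mx, CFC.sqrt_mul_sqrt_self Mx hM.nonneg, by
      have := (CFC.sqrt_nonneg Mx).posSemidef.isHermitian
      simpa [Matrix.IsHermitian] using this⟩
  have key : Mx - Mx * Mx = S * ((1 - Mx) * S) := by
    rw [← Matrix.mul_assoc, Matrix.mul_sub, Matrix.sub_mul, Matrix.mul_one, hSS]
    congr 1
    rw [← hSS]; noncomm_ring
  have h0 : 0 ≤ x ⬝ᵥ ((Mx - Mx * Mx) *ᵥ x) := by
    have hq := hM1.dotProduct_mulVec_nonneg (S *ᵥ x)
    simp only [star_trivial] at hq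
    calc (0:ℝ) ≤ (S *ᵥ x) ⬝ᵥ ((1 - Mx) *ᵥ (S *ᵥ x)) := hq
      _ = x ⬝ᵥ ((Mx - Mx * Mx) *ᵥ x) := by
          rw [SBR.adj_dot, hSH, Matrix.mulVec_mulVec, Matrix.mulVec_mulVec, Matrix.mul_assoc,
            ← key]
  rw [Matrix.sub_mulVec, dotProduct_sub] at h0
  linarith

lemma SBR.pointwise_step (Mx Nmat : Matrix (Fin n) (Fin n) ℝ) (hM : Mx.PosSemidef)
    (hM1 : ((1 : Matrix (Fin n) (Fin n) ℝ) - Mx).PosSemidef) (x : Fin n → ℝ) :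
    (((1:Matrix (Fin n) (Fin n) ℝ) - Mx) *ᵥ x) ⬝ᵥ
        (Nmat *ᵥ (((1:Matrix (Fin n) (Fin n) ℝ) - Mx) *ᵥ x))
      ≤ x ⬝ᵥ ((Nmat - Mx * Nmat - Nmat * Mx + ‖Nmat‖ • Mx) *ᵥ x) := by
  have hMH : ((1:Matrix (Fin n) (Fin n) ℝ) - Mx)ᵀ = 1 - Mx := by
    rw [Matrix.transpose_sub, Matrix.transpose_one, (show Mxᵀ = Mx from hM.isHermitian)]
  have hL : (((1:Matrix (Fin n) (Fin n) ℝ) - Mx) *ᵥ x) ⬝ᵥ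
      (Nmat *ᵥ (((1:Matrix (Fin n) (Fin n) ℝ) - Mx) *ᵥ x))
      = x ⬝ᵥ ((((1:Matrix (Fin n) (Fin n) ℝ) - Mx) * Nmat * (1 - Mx)) *ᵥ x) := by
    rw [SBR.adj_dot, hMH, Matrix.mulVec_mulVec, Matrix.mulVec_mulVec]
  rw [hL]
  have hexp : ((1:Matrix (Fin n) (Fin n) ℝ) - Mx) * Nmat * (1 - Mx)
      = Nmat - Mx * Nmat - Nmat * Mx + Mx * Nmat * Mx := by noncomm_ring
  rw [hexp]
  have hMH' : Mxᵀ = Mx := hM.isHermitian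
  have hkey : x ⬝ᵥ ((Mx * Nmat * Mx) *ᵥ x) ≤ ‖Nmat‖ * (x ⬝ᵥ (Mx *ᵥ x)) := by
    have h1 : x ⬝ᵥ ((Mx * Nmat * Mx) *ᵥ x) = (Mx *ᵥ x) ⬝ᵥ (Nmat *ᵥ (Mx *ᵥ x)) := by
      rw [SBR.adj_dot, hMH', Matrix.mulVec_mulVec, Matrix.mulVec_mulVec]
    rw [h1]
    calc (Mx *ᵥ x) ⬝ᵥ (Nmat *ᵥ (Mx *ᵥ x)) ≤ ‖Nmat‖ * ((Mx *ᵥ x) ⬝ᵥ (Mx *ᵥ x)) :=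
          SBR.quad_le_norm Nmat (Mx *ᵥ x)
      _ ≤ ‖Nmat‖ * (x ⬝ᵥ (Mx *ᵥ x)) := by
          refine mul_le_mul_of_nonneg_left ?_ (norm_nonneg _)
          have h2 : (Mx *ᵥ x) ⬝ᵥ (Mx *ᵥ x) = x ⬝ᵥ ((Mx * Mx) *ᵥ x) := by
            rw [SBR.adj_dot, hMH', Matrix.mulVec_mulVec]
          rw [h2]
          exact SBR.sq_le_self Mx hM hM1 x
  simp only [Matrix.add_mulVec, Matrix.sub_mulVec, dotProduct_add, dotProduct_sub,
    Matrix.smul_mulVec, dotProduct_smul, smul_eq_mul]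
  linarith

lemma SBR.contract_dot (Mx : Matrix (Fin n) (Fin n) ℝ) (hM : Mx.PosSemidef)
    (hM1 : ((1 : Matrix (Fin n) (Fin n) ℝ) - Mx).PosSemidef) (x : Fin n → ℝ) :
    (((1:Matrix (Fin n) (Fin n) ℝ) - Mx) *ᵥ x) ⬝ᵥ
      (((1:Matrix (Fin n) (Fin n) ℝ) - Mx) *ᵥ x) ≤ x ⬝ᵥ x := by
  have hMH : ((1:Matrix (Fin n) (Fin n) ℝ) - Mx)ᵀ = 1 - Mx := by
    rw [Matrix.transpose_sub, Matrix.transpose_one, (show Mxᵀ = Mx from hM.isHermitian)]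
  have h1 : (((1:Matrix (Fin n) (Fin n) ℝ) - Mx) *ᵥ x) ⬝ᵥ
      (((1:Matrix (Fin n) (Fin n) ℝ) - Mx) *ᵥ x)
      = x ⬝ᵥ ((((1:Matrix (Fin n) (Fin n) ℝ) - Mx) * (1 - Mx)) *ᵥ x) := by
    rw [SBR.adj_dot, hMH, Matrix.mulVec_mulVec]
  have h2 := SBR.sq_le_self (1 - Mx) hM1 (by simpa [sub_sub_cancel] using hM) x
  have h3 : x ⬝ᵥ (((1:Matrix (Fin n) (Fin n) ℝ) - Mx) *ᵥ x) ≤ x ⬝ᵥ x := by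
    have hq := hM.dotProduct_mulVec_nonneg x
    simp only [star_trivial] at hq
    rw [Matrix.sub_mulVec, dotProduct_sub, Matrix.one_mulVec]
    linarith
  rw [h1]
  exact h2.trans h3

lemma SBR.entry_bound (Mx : Matrix (Fin n) (Fin n) ℝ) (hM : Mx.PosSemidef)
    (hM1 : ((1 : Matrix (Fin n) (Fin n) ℝ) - Mx).PosSemidef) (i j : Fin n) :
    |Mx i j| ≤ 1 := by
  have key : ∀ v : Fin n → ℝ, v ⬝ᵥ (Mx *ᵥ v) ≤ v ⬝ᵥ v ∧ 0 ≤ v ⬝ᵥ (Mx *ᵥ v) := by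
    intro v
    have h1 := hM1.dotProduct_mulVec_nonneg v
    have h2 := hM.dotProduct_mulVec_nonneg v
    simp only [star_trivial, Matrix.sub_mulVec, dotProduct_sub, Matrix.one_mulVec] at h1 h2
    constructor <;> linarith
  have hsym : Mx j i = Mx i j := by
    have := hM.isHermitian
    rw [Matrix.IsHermitian] at this
    calc Mx j i = Mxᵀ i j := rfl
      _ = Mx i j := by rw [show Mxᵀ = Mx by simpa using this]
  by_cases hij : i = j
  · subst hij
    have h := key (Pi.single i 1)
    have hq : (Pi.single i 1 : Fin n → ℝ) ⬝ᵥ (Mx *ᵥ Pi.single i 1) = Mx i i := by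
      simp [mulVec, dotProduct, Pi.single_apply]
    have hd : (Pi.single i 1 : Fin n → ℝ) ⬝ᵥ (Pi.single i 1 : Fin n → ℝ) = 1 := by
      simp [dotProduct, Pi.single_apply]
    rw [hq, hd] at h
    rw [abs_le]; constructor <;> linarith [h.1, h.2]
  · have hp := key (Pi.single i 1 + Pi.single j 1)
    have hm := key (Pi.single i 1 - Pi.single j 1)
    have hqp : (Pi.single i 1 + Pi.single j 1 : Fin n → ℝ) ⬝ᵥ
        (Mx *ᵥ (Pi.single i 1 + Pi.single j 1)) = Mx i i + Mx j j + 2 * Mx i j := by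
      simp [mulVec, dotProduct, Pi.single_apply, add_mul, mul_add, Finset.sum_add_distrib, hij,
        Ne.symm hij, hsym]
      ring
    have hqm : (Pi.single i 1 - Pi.single j 1 : Fin n → ℝ) ⬝ᵥ
        (Mx *ᵥ (Pi.single i 1 - Pi.single j 1)) = Mx i i + Mx j j - 2 * Mx i j := by
      simp [mulVec, dotProduct, Pi.single_apply, sub_mul, mul_sub, Finset.sum_sub_distrib, hij,
        Ne.symm hij, hsym]
      ring
    have hdp : (Pi.single i 1 + Pi.single j 1 : Fin n → ℝ) ⬝ᵥ
        (Pi.single i 1 + Pi.single j 1 : Fin n → ℝ) = 2 := by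
      simp [dotProduct, Pi.single_apply, add_mul, mul_add, Finset.sum_add_distrib, hij,
        Ne.symm hij]; norm_num
    have hdm : (Pi.single i 1 - Pi.single j 1 : Fin n → ℝ) ⬝ᵥ
        (Pi.single i 1 - Pi.single j 1 : Fin n → ℝ) = 2 := by
      simp [dotProduct, Pi.single_apply, sub_mul, mul_sub, Finset.sum_sub_distrib, hij,
        Ne.symm hij]; norm_num
    have hii := key (Pi.single i 1)
    have hjj := key (Pi.single j 1)
    have hqi : (Pi.single i 1 : Fin n → ℝ) ⬝ᵥ (Mx *ᵥ Pi.single i 1) = Mx i i := by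
      simp [mulVec, dotProduct, Pi.single_apply]
    have hqj : (Pi.single j 1 : Fin n → ℝ) ⬝ᵥ (Mx *ᵥ Pi.single j 1) = Mx j j := by
      simp [mulVec, dotProduct, Pi.single_apply]
    rw [hqp, hdp] at hp
    rw [hqm, hdm] at hm
    rw [hqi] at hii
    rw [hqj] at hjj
    rw [abs_le]
    constructor <;> nlinarith [hii.2, hjj.2, hp.1, hp.2, hm.1, hm.2]

end Aux

/-- for a stochastic contraction process with average rate `M̄`, and
the deterministic recursion `N₀ = M̄`, `N_{t+1} = N_t (I - 2M̄) + ‖N_t‖ M̄`, one has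
`𝔼 ‖Δ_t‖²_{M̄} ≤ 𝔼 ‖Δ_0‖²_{N_t}`. -/
theorem sandwich_by_recursion {n : ℕ} {Ω : Type*} [MeasurableSpace Ω]
    (μ : Measure Ω) [IsProbabilityMeasure μ]
    (M : ℕ → Ω → Matrix (Fin n) (Fin n) ℝ)
    (Δ : ℕ → Ω → (Fin n → ℝ))
    (Mbar : Matrix (Fin n) (Fin n) ℝ)
    (hMmeas : ∀ t, Measurable (M t))
    (hΔmeas : ∀ t, Measurable (Δ t))
    (hpsd : ∀ t ω, (M t ω).PosSemidef)
    (hcontr : ∀ t ω, ((1 : Matrix (Fin n) (Fin n) ℝ) - M t ω).PosSemidef)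
    (hmean : ∀ t i j, (∫ ω, M t ω i j ∂μ) = Mbar i j)
    (hrec : ∀ t ω, Δ (t + 1) ω = ((1 : Matrix (Fin n) (Fin n) ℝ) - M t ω) *ᵥ Δ t ω)
    (hiIndep : iIndepFun (m := fun _ : ℕ => matrixMeasurableSpace) M μ)
    (hindep : ∀ t, IndepFun (Δ t) (M t) μ)
    (hint : Integrable (fun ω => Δ 0 ω ⬝ᵥ Δ 0 ω) μ)
    (N : ℕ → Matrix (Fin n) (Fin n) ℝ)
    (hN0 : N 0 = Mbar)
    (hNrec : ∀ t : ℕ, N (t + 1) = N t * (1 - (2 : ℝ) • Mbar) + ‖N t‖ • Mbar) :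
    ∀ t : ℕ,
      (∫ ω, Δ t ω ⬝ᵥ (Mbar *ᵥ Δ t ω) ∂μ) ≤ ∫ ω, Δ 0 ω ⬝ᵥ (N t *ᵥ Δ 0 ω) ∂μ := by
  -- basic measurability
  have hΔi : ∀ u (i : Fin n), Measurable fun ω => Δ u ω i := fun u i =>
    (measurable_pi_apply i).comp (hΔmeas u)
  have hMkl : ∀ t (k l : Fin n), Measurable fun ω => M t ω k l := fun t k l =>
    (measurable_pi_apply l).comp ((measurable_pi_apply k).comp (hMmeas t))
  -- pointwise domination of the process by its initial value
  have hdom : ∀ u ω, Δ u ω ⬝ᵥ Δ u ω ≤ Δ 0 ω ⬝ᵥ Δ 0 ω := by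
    intro u
    induction u with
    | zero => exact fun ω => le_refl _
    | succ u ih =>
      intro ω
      rw [hrec u ω]
      exact (SBR.contract_dot (M u ω) (hpsd u ω) (hcontr u ω) (Δ u ω)).trans (ih ω)
  -- integrability of products of coordinates
  have habs : ∀ u (i j : Fin n) ω, |Δ u ω i * Δ u ω j| ≤ Δ 0 ω ⬝ᵥ Δ 0 ω := by
    intro u i j ω
    have hsq : ∀ k : Fin n, Δ u ω k * Δ u ω k ≤ Δ u ω ⬝ᵥ Δ u ω := by
      intro k
      rw [dotProduct]
      exact Finset.single_le_sum (f := fun k => Δ u ω k * Δ u ω k)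
        (fun k _ => mul_self_nonneg _) (Finset.mem_univ k)
    have h1 := hsq i
    have h2 := hsq j
    have h3 := hdom u ω
    rw [abs_le]
    constructor <;> nlinarith [sq_nonneg (Δ u ω i + Δ u ω j), sq_nonneg (Δ u ω i - Δ u ω j)]
  have hintij : ∀ u (i j : Fin n), Integrable (fun ω => Δ u ω i * Δ u ω j) μ := by
    intro u i j
    refine hint.mono' (((hΔi u i).mul (hΔi u j)).aestronglyMeasurable) ?_
    exact Filter.Eventually.of_forall fun ω => by
      simpa [Real.norm_eq_abs, abs_mul] using habs u i j ω
  have hintM : ∀ t (k l : Fin n), Integrable (fun ω => M t ω k l) μ := by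
    intro t k l
    refine (integrable_const (1:ℝ)).mono' ((hMkl t k l).aestronglyMeasurable) ?_
    exact Filter.Eventually.of_forall fun ω => by
      simpa [Real.norm_eq_abs] using SBR.entry_bound (M t ω) (hpsd t ω) (hcontr t ω) k l
  -- independence of coordinate products and matrix entries
  have hprod : ∀ u (i j k l : Fin n),
      (∫ ω, (Δ u ω i * Δ u ω j) * M u ω k l ∂μ)
        = (∫ ω, Δ u ω i * Δ u ω j ∂μ) * Mbar k l := by
    intro u i j k l
    have hXm : Measurable fun x : Fin n → ℝ => x i * x j :=
      (measurable_pi_apply i).mul (measurable_pi_apply j)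
    have hYm : Measurable fun A : Matrix (Fin n) (Fin n) ℝ => A k l :=
      (measurable_pi_apply l).comp (measurable_pi_apply k)
    have hIF : IndepFun (fun ω => Δ u ω i * Δ u ω j) (fun ω => M u ω k l) μ :=
      (hindep u).comp hXm hYm
    rw [← hmean u k l]
    exact IndepFun.integral_fun_smul_eq_smul_integral hIF (hintij u i j).aestronglyMeasurable
      (hintM u k l).aestronglyMeasurable
  -- integrability of products with matrix entries
  have hbase : ∀ u (i j k l : Fin n),
      Integrable (fun ω => (Δ u ω i * Δ u ω j) * M u ω k l) μ := by
    intro u i j k l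
    have h := (hintij u i j).bdd_mul (c := 1) ((hMkl u k l).aestronglyMeasurable)
      (Filter.Eventually.of_forall fun ω => by
        simpa [Real.norm_eq_abs] using SBR.entry_bound (M u ω) (hpsd u ω) (hcontr u ω) k l)
    have he : (fun ω => (Δ u ω i * Δ u ω j) * M u ω k l)
        = fun ω => M u ω k l * (Δ u ω i * Δ u ω j) := funext fun ω => mul_comm _ _
    rw [he]
    exact h
  -- integral of a constant quadratic form
  have hconstEq : ∀ (A : Matrix (Fin n) (Fin n) ℝ) u,
      (∫ ω, Δ u ω ⬝ᵥ (A *ᵥ Δ u ω) ∂μ)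
        = ∑ i, ∑ j, A i j * (∫ ω, Δ u ω i * Δ u ω j ∂μ) := by
    intro A u
    have h1 : (fun ω => Δ u ω ⬝ᵥ (A *ᵥ Δ u ω))
        = fun ω => ∑ i, ∑ j, A i j * (Δ u ω i * Δ u ω j) := by
      funext ω
      rw [SBR.quad_expand]
      exact Finset.sum_congr rfl fun i _ => Finset.sum_congr rfl fun j _ => by ring
    rw [h1, integral_finset_sum _ (fun i _ =>
      integrable_finset_sum _ (fun j _ => (hintij u i j).const_mul (A i j)))]
    refine Finset.sum_congr rfl fun i _ => ?_
    rw [integral_finset_sum _ (fun j _ => (hintij u i j).const_mul (A i j))]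
    exact Finset.sum_congr rfl fun j _ => integral_const_mul _ _
  have hconstInt : ∀ (A : Matrix (Fin n) (Fin n) ℝ) u,
      Integrable (fun ω => Δ u ω ⬝ᵥ (A *ᵥ Δ u ω)) μ := by
    intro A u
    have h1 : (fun ω => Δ u ω ⬝ᵥ (A *ᵥ Δ u ω))
        = fun ω => ∑ i, ∑ j, A i j * (Δ u ω i * Δ u ω j) := by
      funext ω
      rw [SBR.quad_expand]
      exact Finset.sum_congr rfl fun i _ => Finset.sum_congr rfl fun j _ => by ring
    rw [h1]
    exact integrable_finset_sum _ (fun i _ =>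
      integrable_finset_sum _ (fun j _ => (hintij u i j).const_mul (A i j)))
  -- expansion of sandwiched quadratic forms
  have hexpand : ∀ (P Q B : Matrix (Fin n) (Fin n) ℝ) (x : Fin n → ℝ),
      x ⬝ᵥ ((P * B * Q) *ᵥ x)
        = ∑ i, ∑ j, ∑ l, ∑ k, (P i k * Q l j) * ((x i * x j) * B k l) := by
    intro P Q B x
    rw [SBR.quad_expand]
    refine Finset.sum_congr rfl fun i _ => Finset.sum_congr rfl fun j _ => ?_
    simp only [Matrix.mul_apply, Finset.sum_mul, Finset.mul_sum]
    exact Finset.sum_congr rfl fun l _ => Finset.sum_congr rfl fun k _ => by ring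
  -- integrability of random sandwiched quadratic forms
  have hrandInt : ∀ (P Q : Matrix (Fin n) (Fin n) ℝ) u,
      Integrable (fun ω => Δ u ω ⬝ᵥ ((P * M u ω * Q) *ᵥ Δ u ω)) μ := by
    intro P Q u
    have h1 : (fun ω => Δ u ω ⬝ᵥ ((P * M u ω * Q) *ᵥ Δ u ω))
        = fun ω => ∑ i, ∑ j, ∑ l, ∑ k,
            (P i k * Q l j) * ((Δ u ω i * Δ u ω j) * M u ω k l) := by
      funext ω; exact hexpand P Q (M u ω) (Δ u ω)
    rw [h1]
    exact integrable_finset_sum _ fun i _ => integrable_finset_sum _ fun j _ =>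
      integrable_finset_sum _ fun l _ => integrable_finset_sum _ fun k _ =>
        (hbase u i j k l).const_mul _
  -- the key independence identity
  have keyI : ∀ (P Q : Matrix (Fin n) (Fin n) ℝ) u,
      (∫ ω, Δ u ω ⬝ᵥ ((P * M u ω * Q) *ᵥ Δ u ω) ∂μ)
        = ∫ ω, Δ u ω ⬝ᵥ ((P * Mbar * Q) *ᵥ Δ u ω) ∂μ := by
    intro P Q u
    have h1 : (fun ω => Δ u ω ⬝ᵥ ((P * M u ω * Q) *ᵥ Δ u ω))
        = fun ω => ∑ i, ∑ j, ∑ l, ∑ k,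
            (P i k * Q l j) * ((Δ u ω i * Δ u ω j) * M u ω k l) := by
      funext ω; exact hexpand P Q (M u ω) (Δ u ω)
    rw [h1]
    rw [integral_finset_sum _ (fun i _ => integrable_finset_sum _ fun j _ =>
      integrable_finset_sum _ fun l _ => integrable_finset_sum _ fun k _ =>
        (hbase u i j k l).const_mul _)]
    have h2 : ∀ i : Fin n,
        (∫ ω, ∑ j, ∑ l, ∑ k, (P i k * Q l j) * ((Δ u ω i * Δ u ω j) * M u ω k l) ∂μ)
          = ∑ j, ∑ l, ∑ k, (P i k * Q l j) * ((∫ ω, Δ u ω i * Δ u ω j ∂μ) * Mbar k l) := by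
      intro i
      rw [integral_finset_sum _ (fun j _ => integrable_finset_sum _ fun l _ =>
        integrable_finset_sum _ fun k _ => (hbase u i j k l).const_mul _)]
      refine Finset.sum_congr rfl fun j _ => ?_
      rw [integral_finset_sum _ (fun l _ =>
        integrable_finset_sum _ fun k _ => (hbase u i j k l).const_mul _)]
      refine Finset.sum_congr rfl fun l _ => ?_
      rw [integral_finset_sum _ (fun k _ => (hbase u i j k l).const_mul _)]
      refine Finset.sum_congr rfl fun k _ => ?_
      rw [integral_const_mul, hprod u i j k l]
    rw [Finset.sum_congr rfl fun i _ => h2 i]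
    rw [hconstEq (P * Mbar * Q) u]
    refine Finset.sum_congr rfl fun i _ => Finset.sum_congr rfl fun j _ => ?_
    simp only [Matrix.mul_apply, Finset.sum_mul, Finset.mul_sum]
    exact Finset.sum_congr rfl fun l _ => Finset.sum_congr rfl fun k _ => by ring
  -- pointwise splitting of the affine quadratic form
  have hsplit : ∀ (Nm B : Matrix (Fin n) (Fin n) ℝ) (c : ℝ) (x : Fin n → ℝ),
      x ⬝ᵥ ((Nm - B * Nm - Nm * B + c • B) *ᵥ x)
        = x ⬝ᵥ (Nm *ᵥ x) - x ⬝ᵥ ((1 * B * Nm) *ᵥ x)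
          - x ⬝ᵥ ((Nm * B * 1) *ᵥ x) + c * (x ⬝ᵥ ((1 * B * 1) *ᵥ x)) := by
    intro Nm B c x
    simp only [Matrix.one_mul, Matrix.mul_one, Matrix.sub_mulVec, Matrix.add_mulVec,
      dotProduct_sub, dotProduct_add, Matrix.smul_mulVec, dotProduct_smul, smul_eq_mul]
  -- the one-step expectation inequality
  have stepE : ∀ (u : ℕ) (Nm : Matrix (Fin n) (Fin n) ℝ),
      (∫ ω, Δ (u+1) ω ⬝ᵥ (Nm *ᵥ Δ (u+1) ω) ∂μ)
        ≤ ∫ ω, Δ u ω ⬝ᵥ ((Nm - Mbar * Nm - Nm * Mbar + ‖Nm‖ • Mbar) *ᵥ Δ u ω) ∂μ := by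
    intro u Nm
    have hpt : ∀ ω, Δ (u+1) ω ⬝ᵥ (Nm *ᵥ Δ (u+1) ω)
        ≤ Δ u ω ⬝ᵥ ((Nm - M u ω * Nm - Nm * M u ω + ‖Nm‖ • M u ω) *ᵥ Δ u ω) := by
      intro ω
      rw [hrec u ω]
      exact SBR.pointwise_step (M u ω) Nm (hpsd u ω) (hcontr u ω) (Δ u ω)
    have hi2 : Integrable
        (fun ω => Δ u ω ⬝ᵥ ((Nm - M u ω * Nm - Nm * M u ω + ‖Nm‖ • M u ω) *ᵥ Δ u ω)) μ := by
      have he : (fun ω => Δ u ω ⬝ᵥ ((Nm - M u ω * Nm - Nm * M u ω + ‖Nm‖ • M u ω) *ᵥ Δ u ω))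
          = fun ω => Δ u ω ⬝ᵥ (Nm *ᵥ Δ u ω) - Δ u ω ⬝ᵥ ((1 * M u ω * Nm) *ᵥ Δ u ω)
            - Δ u ω ⬝ᵥ ((Nm * M u ω * 1) *ᵥ Δ u ω)
            + ‖Nm‖ * (Δ u ω ⬝ᵥ ((1 * M u ω * 1) *ᵥ Δ u ω)) := by
        funext ω; exact hsplit Nm (M u ω) ‖Nm‖ (Δ u ω)
      rw [he]
      exact (((hconstInt Nm u).sub (hrandInt 1 Nm u)).sub (hrandInt Nm 1 u)).add
        ((hrandInt 1 1 u).const_mul ‖Nm‖)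
    have hmono := integral_mono (hconstInt Nm (u+1)) hi2 hpt
    refine hmono.trans (le_of_eq ?_)
    have he : (fun ω => Δ u ω ⬝ᵥ ((Nm - M u ω * Nm - Nm * M u ω + ‖Nm‖ • M u ω) *ᵥ Δ u ω))
        = fun ω => Δ u ω ⬝ᵥ (Nm *ᵥ Δ u ω) - Δ u ω ⬝ᵥ ((1 * M u ω * Nm) *ᵥ Δ u ω)
          - Δ u ω ⬝ᵥ ((Nm * M u ω * 1) *ᵥ Δ u ω)
          + ‖Nm‖ * (Δ u ω ⬝ᵥ ((1 * M u ω * 1) *ᵥ Δ u ω)) := by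
      funext ω; exact hsplit Nm (M u ω) ‖Nm‖ (Δ u ω)
    have he' : (fun ω => Δ u ω ⬝ᵥ ((Nm - Mbar * Nm - Nm * Mbar + ‖Nm‖ • Mbar) *ᵥ Δ u ω))
        = fun ω => Δ u ω ⬝ᵥ (Nm *ᵥ Δ u ω) - Δ u ω ⬝ᵥ ((1 * Mbar * Nm) *ᵥ Δ u ω)
          - Δ u ω ⬝ᵥ ((Nm * Mbar * 1) *ᵥ Δ u ω)
          + ‖Nm‖ * (Δ u ω ⬝ᵥ ((1 * Mbar * 1) *ᵥ Δ u ω)) := by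
      funext ω; exact hsplit Nm Mbar ‖Nm‖ (Δ u ω)
    have intsplit : ∀ (f g h k : Ω → ℝ), Integrable f μ → Integrable g μ →
        Integrable h μ → Integrable k μ →
        (∫ ω, (f ω - g ω - h ω + k ω) ∂μ)
          = (∫ ω, f ω ∂μ) - (∫ ω, g ω ∂μ) - (∫ ω, h ω ∂μ) + (∫ ω, k ω ∂μ) := by
      intro f g h k hf hg hh hk
      have h3 : Integrable (fun ω => f ω - g ω - h ω) μ := (hf.sub hg).sub hh
      have h2 : Integrable (fun ω => f ω - g ω) μ := hf.sub hg
      rw [integral_add h3 hk, integral_sub h2 hh, integral_sub hf hg]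
    rw [he, he']
    rw [intsplit (fun ω => Δ u ω ⬝ᵥ (Nm *ᵥ Δ u ω))
        (fun ω => Δ u ω ⬝ᵥ ((1 * M u ω * Nm) *ᵥ Δ u ω))
        (fun ω => Δ u ω ⬝ᵥ ((Nm * M u ω * 1) *ᵥ Δ u ω))
        (fun ω => ‖Nm‖ * (Δ u ω ⬝ᵥ ((1 * M u ω * 1) *ᵥ Δ u ω)))
        (hconstInt Nm u) (hrandInt 1 Nm u) (hrandInt Nm 1 u)
        ((hrandInt 1 1 u).const_mul ‖Nm‖),
      intsplit (fun ω => Δ u ω ⬝ᵥ (Nm *ᵥ Δ u ω))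
        (fun ω => Δ u ω ⬝ᵥ ((1 * Mbar * Nm) *ᵥ Δ u ω))
        (fun ω => Δ u ω ⬝ᵥ ((Nm * Mbar * 1) *ᵥ Δ u ω))
        (fun ω => ‖Nm‖ * (Δ u ω ⬝ᵥ ((1 * Mbar * 1) *ᵥ Δ u ω)))
        (hconstInt Nm u) (hconstInt (1 * Mbar * Nm) u) (hconstInt (Nm * Mbar * 1) u)
        ((hconstInt (1 * Mbar * 1) u).const_mul ‖Nm‖),
      integral_const_mul, integral_const_mul, keyI 1 Nm u, keyI Nm 1 u, keyI 1 1 u]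
  -- commutation of N s with Mbar
  have hcomm : ∀ s, Commute (N s) Mbar := by
    intro s
    induction s with
    | zero => rw [hN0]
    | succ s ih =>
      rw [hNrec]
      have c1 : Commute (1 - (2:ℝ) • Mbar) Mbar :=
        (Commute.one_left Mbar).sub_left ((Commute.refl Mbar).smul_left (2:ℝ))
      have c2 : Commute (‖N s‖ • Mbar) Mbar := (Commute.refl Mbar).smul_left _
      exact (ih.mul_left c1).add_left c2
  -- algebraic identity for the recursion
  have halg : ∀ s, N s - Mbar * N s - N s * Mbar + ‖N s‖ • Mbar = N (s + 1) := by
    intro s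
    rw [hNrec]
    have h2 : Mbar * N s = N s * Mbar := (hcomm s).symm
    rw [h2, Matrix.mul_sub, Matrix.mul_one]
    have h3 : N s * ((2:ℝ) • Mbar) = (2:ℝ) • (N s * Mbar) := mul_smul_comm _ _ _
    rw [h3, two_smul]
    abel
  -- main induction
  have main : ∀ s u, (∫ ω, Δ (u + s) ω ⬝ᵥ (Mbar *ᵥ Δ (u + s) ω) ∂μ)
      ≤ ∫ ω, Δ u ω ⬝ᵥ (N s *ᵥ Δ u ω) ∂μ := by
    intro s
    induction s with
    | zero => intro u; simp [hN0]
    | succ s ih =>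
      intro u
      have h1 : u + (s + 1) = (u + 1) + s := by ring
      calc (∫ ω, Δ (u + (s+1)) ω ⬝ᵥ (Mbar *ᵥ Δ (u + (s+1)) ω) ∂μ)
          = ∫ ω, Δ ((u+1) + s) ω ⬝ᵥ (Mbar *ᵥ Δ ((u+1) + s) ω) ∂μ := by rw [h1]
        _ ≤ ∫ ω, Δ (u+1) ω ⬝ᵥ (N s *ᵥ Δ (u+1) ω) ∂μ := ih (u+1)
        _ ≤ ∫ ω, Δ u ω ⬝ᵥ ((N s - Mbar * N s - N s * Mbar + ‖N s‖ • Mbar) *ᵥ Δ u ω) ∂μ :=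
            stepE u (N s)
        _ = ∫ ω, Δ u ω ⬝ᵥ (N (s+1) *ᵥ Δ u ω) ∂μ := by rw [halg s]
  intro t
  simpa using main t 0
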